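/- Let p ∈ ℕ, λ > 0, v ≥ 0 (playing the role of σ²/n), s_1 ≥ s_2 ≥ … ≥ s_p ≥ 0 and a_1, …, a_p ∈ ℝ. Assume that for every i ∈ {1,…,p}: λ·Σ_{j=i}^p s_j a_j² ≥ v·Σ_{j=i}^p s_j. Define for t ≥ 0 the gradient-flow prediction risk r(t) := Σ_{i=1}^p [ a_i²·(s_i·e^{−t(s_i+λ)} + λ)²/(s_i+λ) + v·(1 − e^{−t(s_i+λ)})²·s_i/(s_i+λ) ]. Then r is monotonically nonincreasing on [0,∞). -/

import Mathlib

/-- Abel-summation style lemma: if `E` is nonnegative and nondecreasing on `[1,p]` and all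
tail sums of `c` are nonnegative, then `∑ E i * c i ≥ 0`. -/
lemma abel_nonneg (p : ℕ) (E c : ℕ → ℝ)
    (hE0 : ∀ i, 1 ≤ i → i ≤ p → 0 ≤ E i)
    (hEmono : ∀ i, 1 ≤ i → i + 1 ≤ p → E i ≤ E (i + 1))
    (hT : ∀ k, 1 ≤ k → k ≤ p → 0 ≤ ∑ j ∈ Finset.Icc k p, c j) :
    0 ≤ ∑ i ∈ Finset.Icc 1 p, E i * c i := by
  rcases Nat.eq_zero_or_pos p with hp | hp
  · subst hp; simp
  have key : ∀ d k, k + d = p → 1 ≤ k →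
      E k * (∑ j ∈ Finset.Icc k p, c j) ≤ ∑ i ∈ Finset.Icc k p, E i * c i := by
    intro d
    induction d with
    | zero =>
      intro k hk h1
      have : k = p := by omega
      subst this
      simp
    | succ d ih =>
      intro k hk h1
      have hklt : k < p := by omega
      have hsplit : Finset.Icc k p = insert k (Finset.Icc (k + 1) p) := by
        ext x; simp [Finset.mem_Icc]; omega
      have hnotmem : k ∉ Finset.Icc (k + 1) p := by simp
      have ihk := ih (k + 1) (by omega) (by omega)
      have hT1 : 0 ≤ ∑ j ∈ Finset.Icc (k + 1) p, c j := hT (k + 1) (by omega) (by omega)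
      have hEk : E k ≤ E (k + 1) := hEmono k h1 (by omega)
      have hmul : E k * ∑ j ∈ Finset.Icc (k + 1) p, c j
          ≤ E (k + 1) * ∑ j ∈ Finset.Icc (k + 1) p, c j :=
        mul_le_mul_of_nonneg_right hEk hT1
      rw [hsplit, Finset.sum_insert hnotmem, Finset.sum_insert hnotmem]
      have : E k * (c k + ∑ j ∈ Finset.Icc (k + 1) p, c j)
          = E k * c k + E k * ∑ j ∈ Finset.Icc (k + 1) p, c j := by ring
      rw [this]
      linarith
  have h1 := key (p - 1) 1 (by omega) le_rfl
  have hE1 : 0 ≤ E 1 := hE0 1 le_rfl hp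
  have hT1 : 0 ≤ ∑ j ∈ Finset.Icc 1 p, c j := hT 1 le_rfl hp
  nlinarith

/-- for a sufficiently large penalty `λ` (condition on partial sums), the
gradient-flow prediction risk `r` (written in eigencoordinates) is monotonically nonincreasing
on `[0,∞)`. -/
theorem gf_risk_monotone
    (p : ℕ) (lam : ℝ) (hlam : 0 < lam) (v : ℝ) (hv : 0 ≤ v)
    (s : ℕ → ℝ)
    (hmono : ∀ i j, 1 ≤ i → i ≤ j → j ≤ p → s j ≤ s i)
    (hnonneg : ∀ j, 1 ≤ j → j ≤ p → 0 ≤ s j)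
    (a : ℕ → ℝ)
    (hcond : ∀ i, 1 ≤ i → i ≤ p →
      v * ∑ j ∈ Finset.Icc i p, s j ≤ lam * ∑ j ∈ Finset.Icc i p, s j * a j ^ 2)
    (r : ℝ → ℝ)
    (hr : ∀ t : ℝ, r t = ∑ i ∈ Finset.Icc 1 p,
      (a i ^ 2 * (s i * Real.exp (-(t * (s i + lam))) + lam) ^ 2 / (s i + lam)
        + v * (1 - Real.exp (-(t * (s i + lam)))) ^ 2 * s i / (s i + lam))) :
    ∀ t₁ t₂ : ℝ, 0 ≤ t₁ → t₁ ≤ t₂ → r t₂ ≤ r t₁ := by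
  intro t₁ t₂ ht₁ ht₂
  have hs' : ∀ i, 1 ≤ i → i ≤ p → (0 : ℝ) < s i + lam := by
    intro i h1 h2
    have := hnonneg i h1 h2
    linarith
  -- the derivative of the risk at every point
  have hderiv : ∀ t : ℝ, HasDerivAt (fun t : ℝ => ∑ i ∈ Finset.Icc 1 p,
      (a i ^ 2 * (s i * Real.exp (-(t * (s i + lam))) + lam) ^ 2 / (s i + lam)
        + v * (1 - Real.exp (-(t * (s i + lam)))) ^ 2 * s i / (s i + lam)))
      (∑ i ∈ Finset.Icc 1 p,
        (-2 * a i ^ 2 * s i * Real.exp (-(t * (s i + lam)))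
            * (s i * Real.exp (-(t * (s i + lam))) + lam)
          + 2 * v * s i * Real.exp (-(t * (s i + lam)))
            * (1 - Real.exp (-(t * (s i + lam)))))) t := by
    intro t
    apply HasDerivAt.fun_sum
    intro i hi
    simp only [Finset.mem_Icc] at hi
    have hne : s i + lam ≠ 0 := ne_of_gt (hs' i hi.1 hi.2)
    have hlin : HasDerivAt (fun t : ℝ => -(t * (s i + lam))) (-(s i + lam)) t := by
      simpa using ((hasDerivAt_id t).mul_const (s i + lam)).fun_neg
    have hE : HasDerivAt (fun t : ℝ => Real.exp (-(t * (s i + lam))))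
        (Real.exp (-(t * (s i + lam))) * -(s i + lam)) t := hlin.exp
    have h1 := ((((hE.const_mul (s i)).add_const lam).fun_pow 2).const_mul (a i ^ 2)).div_const
      (s i + lam)
    have h2 := (((((hasDerivAt_const t (1 : ℝ)).fun_sub hE).fun_pow 2).const_mul v).mul_const
      (s i)).div_const (s i + lam)
    have h12 := h1.fun_add h2
    convert h12 using 1
    field_simp
    ring
  have hdiff : Differentiable ℝ (fun t : ℝ => ∑ i ∈ Finset.Icc 1 p,
      (a i ^ 2 * (s i * Real.exp (-(t * (s i + lam))) + lam) ^ 2 / (s i + lam)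
        + v * (1 - Real.exp (-(t * (s i + lam)))) ^ 2 * s i / (s i + lam))) :=
    fun t => (hderiv t).differentiableAt
  have hanti : AntitoneOn (fun t : ℝ => ∑ i ∈ Finset.Icc 1 p,
      (a i ^ 2 * (s i * Real.exp (-(t * (s i + lam))) + lam) ^ 2 / (s i + lam)
        + v * (1 - Real.exp (-(t * (s i + lam)))) ^ 2 * s i / (s i + lam)))
      (Set.Ici 0) := by
    apply antitoneOn_of_deriv_nonpos (convex_Ici 0) hdiff.continuous.continuousOn
      (fun t _ => (hdiff t).differentiableWithinAt)
    intro t ht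
    rw [interior_Ici] at ht
    have ht0 : (0 : ℝ) ≤ t := le_of_lt ht
    rw [(hderiv t).deriv]
    -- split the derivative into the Abel part and a termwise nonpositive part
    have hsum_eq : (∑ i ∈ Finset.Icc 1 p,
        (-2 * a i ^ 2 * s i * Real.exp (-(t * (s i + lam)))
            * (s i * Real.exp (-(t * (s i + lam))) + lam)
          + 2 * v * s i * Real.exp (-(t * (s i + lam)))
            * (1 - Real.exp (-(t * (s i + lam))))))
        = -2 * (∑ i ∈ Finset.Icc 1 p,
            Real.exp (-(t * (s i + lam))) * (lam * (s i * a i ^ 2) - v * s i))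
          + -2 * (∑ i ∈ Finset.Icc 1 p,
            Real.exp (-(t * (s i + lam))) ^ 2 * (s i * (a i ^ 2 * s i + v))) := by
      rw [Finset.mul_sum, Finset.mul_sum, ← Finset.sum_add_distrib]
      refine Finset.sum_congr rfl fun i _ => ?_
      ring
    rw [hsum_eq]
    have h1 : 0 ≤ ∑ i ∈ Finset.Icc 1 p,
        Real.exp (-(t * (s i + lam))) * (lam * (s i * a i ^ 2) - v * s i) := by
      apply abel_nonneg p
      · intro i _ _
        positivity
      · intro i h1i hip
        have hs : s (i + 1) ≤ s i := hmono i (i + 1) h1i (Nat.le_succ i) hip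
        apply Real.exp_le_exp.2
        nlinarith
      · intro k hk hkp
        have hc := hcond k hk hkp
        have heq : ∑ j ∈ Finset.Icc k p, (lam * (s j * a j ^ 2) - v * s j)
            = lam * (∑ j ∈ Finset.Icc k p, s j * a j ^ 2)
              - v * ∑ j ∈ Finset.Icc k p, s j := by
          rw [Finset.mul_sum, Finset.mul_sum, ← Finset.sum_sub_distrib]
        rw [heq]
        linarith
    have h2 : 0 ≤ ∑ i ∈ Finset.Icc 1 p,
        Real.exp (-(t * (s i + lam))) ^ 2 * (s i * (a i ^ 2 * s i + v)) := by
      apply Finset.sum_nonneg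
      intro i hi
      simp only [Finset.mem_Icc] at hi
      have := hnonneg i hi.1 hi.2
      positivity
    linarith
  have := hanti (Set.mem_Ici.2 ht₁) (Set.mem_Ici.2 (ht₁.trans ht₂)) ht₂
  rw [hr t₁, hr t₂]
  exact this
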